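/- Let N be a positive integer. For every primitive vector v ∈ ℤ³ there exist a positive divisor d of N, a matrix γ ∈ Γ₀(N,3)′, and a sign s ∈ {1,−1} such that γ·v = s·(d,1,0)ᵀ. Moreover d is uniquely determined by v: if d and d′ are positive divisors of N and some elements of Γ₀(N,3)′ carry v to ±(d,1,0)ᵀ and to ±(d′,1,0)ᵀ respectively, then d = d′. (Equivalently, the Γ₀(N,3)′-orbits of lines in ℚ³ are in one-to-one correspondence with the positive divisors of N, the line for d being spanned by (d,1,0)ᵀ.) -/

import Mathlib

/-- Membership in `Γ₀(N,3)′`: an element of `SL₃(ℤ)` whose `(1,2)` and `(1,3)` entries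
(`1`-indexed), i.e. the entries `(0,1)` and `(0,2)` in `0`-indexed notation, are divisible
by `N`. -/
def InGamma0' (N : ℕ) (γ : Matrix.SpecialLinearGroup (Fin 3) ℤ) : Prop :=
  (N : ℤ) ∣ (γ : Matrix (Fin 3) (Fin 3) ℤ) 0 1 ∧
  (N : ℤ) ∣ (γ : Matrix (Fin 3) (Fin 3) ℤ) 0 2

/-- `γ` carries the vector `v` to `± w`. -/
def CarriesTo (γ : Matrix.SpecialLinearGroup (Fin 3) ℤ) (v w : Fin 3 → ℤ) : Prop :=
  ∃ s : ℤ, (s = 1 ∨ s = -1) ∧ (γ : Matrix (Fin 3) (Fin 3) ℤ).mulVec v = s • w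

theorem univ_gcd_eq (v : Fin 3 → ℤ) (h : Finset.univ.gcd v = 1) :
    Int.gcd (v 0) (Int.gcd (v 1) (v 2)) = 1 := by
  rw [show (Finset.univ : Finset (Fin 3)) = {0, 1, 2} by rfl] at h
  simp only [Finset.gcd_insert, Finset.gcd_singleton, ← Int.abs_eq_normalize,
    ← Int.coe_gcd] at h
  simp only [Int.gcd, Int.natAbs_abs, Int.natAbs_natCast] at h
  exact_mod_cast h

theorem exists_coprime_add_mul (a b : ℤ) (n : ℕ) (hab : IsCoprime a b) (hn : n ≠ 0) :
    ∃ k : ℤ, IsCoprime (a + b * k) (n : ℤ) := by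
  classical
  set K : ℕ := ∏ p ∈ n.primeFactors.filter (fun p : ℕ => ¬ ((p : ℤ) ∣ a)), p with hK
  refine ⟨(K : ℤ), ?_⟩
  rw [Int.isCoprime_iff_gcd_eq_one]
  by_contra hg
  set g := Int.gcd (a + b * K) n with hgdef
  have hgn : (g : ℤ) ∣ (n : ℤ) := Int.gcd_dvd_right _ _
  have hga : (g : ℤ) ∣ a + b * K := Int.gcd_dvd_left _ _
  have hg0 : g ≠ 0 := by
    intro h
    rw [hgdef, Int.gcd_eq_zero_iff] at h
    exact hn (by exact_mod_cast h.2)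
  have hp : (g.minFac).Prime := Nat.minFac_prime hg
  set p := g.minFac with hpdef
  have hpg : (p : ℤ) ∣ (g : ℤ) := Int.natCast_dvd_natCast.mpr (Nat.minFac_dvd g)
  have hpn : p ∣ n := by exact_mod_cast hpg.trans hgn
  have hpabK : (p : ℤ) ∣ a + b * K := hpg.trans hga
  have hpZ : Prime (p : ℤ) := Nat.prime_iff_prime_int.mp hp
  by_cases hpa : (p : ℤ) ∣ a
  · have hpK : ¬ p ∣ K := by
      intro hdvd
      obtain ⟨q, hq, hpq⟩ := (Nat.Prime.prime hp).exists_mem_finset_dvd hdvd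
      rw [Finset.mem_filter] at hq
      have : p = q := (Nat.prime_dvd_prime_iff_eq hp (Nat.prime_of_mem_primeFactors hq.1)).mp hpq
      exact hq.2 (this ▸ hpa)
    have hpbK : (p : ℤ) ∣ b * K := (dvd_add_right hpa).mp hpabK
    rcases hpZ.dvd_mul.mp hpbK with hb | hK'
    · obtain ⟨u, v, huv⟩ := hab
      have : (p : ℤ) ∣ 1 := by
        rw [← huv]; exact dvd_add (Dvd.dvd.mul_left hpa u) (Dvd.dvd.mul_left hb v)
      exact hpZ.not_unit (isUnit_of_dvd_one this)
    · exact hpK (by exact_mod_cast hK')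
  · have hmem : p ∈ n.primeFactors.filter (fun p : ℕ => ¬ ((p : ℤ) ∣ a)) := by
      rw [Finset.mem_filter, Nat.mem_primeFactors]
      exact ⟨⟨hp, hpn, hn⟩, hpa⟩
    have hpK : p ∣ K := Finset.dvd_prod_of_mem _ hmem
    have hpbK : (p : ℤ) ∣ b * K := Dvd.dvd.mul_left (Int.natCast_dvd_natCast.mpr hpK) b
    exact hpa ((dvd_add_left hpbK).mp hpabK)

def GRel (N : ℕ) (v w : Fin 3 → ℤ) : Prop :=
  ∃ γ : Matrix.SpecialLinearGroup (Fin 3) ℤ,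
    ((N : ℤ) ∣ (γ : Matrix (Fin 3) (Fin 3) ℤ) 0 1 ∧ (N : ℤ) ∣ (γ : Matrix (Fin 3) (Fin 3) ℤ) 0 2)
    ∧ (γ : Matrix (Fin 3) (Fin 3) ℤ).mulVec v = w

theorem GRel.trans {N : ℕ} {u v w : Fin 3 → ℤ} (h1 : GRel N u v) (h2 : GRel N v w) : GRel N u w := by
  obtain ⟨γ1, ⟨ha1, ha2⟩, hv1⟩ := h1
  obtain ⟨γ2, ⟨hb1, hb2⟩, hv2⟩ := h2
  refine ⟨γ2 * γ1, ⟨?_, ?_⟩, ?_⟩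
  · show (N:ℤ) ∣ ((γ2 : Matrix (Fin 3) (Fin 3) ℤ) * (γ1 : Matrix (Fin 3) (Fin 3) ℤ)) 0 1
    rw [Matrix.mul_apply, Fin.sum_univ_three]
    exact dvd_add (dvd_add (Dvd.dvd.mul_left ha1 _) (Dvd.dvd.mul_right hb1 _))
      (Dvd.dvd.mul_right hb2 _)
  · show (N:ℤ) ∣ ((γ2 : Matrix (Fin 3) (Fin 3) ℤ) * (γ1 : Matrix (Fin 3) (Fin 3) ℤ)) 0 2
    rw [Matrix.mul_apply, Fin.sum_univ_three]
    exact dvd_add (dvd_add (Dvd.dvd.mul_left ha2 _) (Dvd.dvd.mul_right hb1 _))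
      (Dvd.dvd.mul_right hb2 _)
  · show ((γ2 : Matrix (Fin 3) (Fin 3) ℤ) * (γ1 : Matrix (Fin 3) (Fin 3) ℤ)).mulVec u = w
    rw [← Matrix.mulVec_mulVec, hv1, hv2]

theorem mkStep (N : ℕ) (m : Matrix (Fin 3) (Fin 3) ℤ) (hdet : m.det = 1)
    (h1 : (N:ℤ) ∣ m 0 1) (h2 : (N:ℤ) ∣ m 0 2) (v w : Fin 3 → ℤ) (hw : m.mulVec v = w) :
    GRel N v w := ⟨⟨m, hdet⟩, ⟨h1, h2⟩, hw⟩

-- Step A : reduce last two coordinates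
theorem stepA (N : ℕ) (v : Fin 3 → ℤ) :
    GRel N v ![v 0, (Int.gcd (v 1) (v 2) : ℤ), 0] := by
  obtain ⟨a, b, c2, d2, hab, hcd, hdet2⟩ :
      ∃ a b c2 d2 : ℤ, a*(v 1)+b*(v 2) = (Int.gcd (v 1) (v 2) : ℤ) ∧
        c2*(v 1)+d2*(v 2) = 0 ∧ a*d2 - b*c2 = 1 := by
    by_cases h0 : Int.gcd (v 1) (v 2) = 0
    · have hy : v 1 = 0 := (Int.gcd_eq_zero_iff.mp h0).1
      have hz : v 2 = 0 := (Int.gcd_eq_zero_iff.mp h0).2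
      exact ⟨1, 0, 0, 1, by simp [hy, hz], by rw [hy, hz]; ring, by ring⟩
    · have hg : ((Int.gcd (v 1) (v 2) : ℤ)) = (v 1) * Int.gcdA (v 1) (v 2)
          + (v 2) * Int.gcdB (v 1) (v 2) := Int.gcd_eq_gcd_ab (v 1) (v 2)
      obtain ⟨y', hy'⟩ : ((Int.gcd (v 1) (v 2) : ℤ)) ∣ v 1 := Int.gcd_dvd_left _ _
      obtain ⟨z', hz'⟩ : ((Int.gcd (v 1) (v 2) : ℤ)) ∣ v 2 := Int.gcd_dvd_right _ _
      have hgne : ((Int.gcd (v 1) (v 2) : ℤ)) ≠ 0 := by exact_mod_cast h0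
      refine ⟨Int.gcdA (v 1) (v 2), Int.gcdB (v 1) (v 2), -z', y', by linear_combination -hg,
        by linear_combination (-z') * hy' + y' * hz', ?_⟩
      have key : ((Int.gcd (v 1) (v 2) : ℤ)) *
          (Int.gcdA (v 1) (v 2) * y' - Int.gcdB (v 1) (v 2) * (-z'))
          = ((Int.gcd (v 1) (v 2) : ℤ)) * 1 := by
        linear_combination -hg - Int.gcdA (v 1) (v 2) * hy' - Int.gcdB (v 1) (v 2) * hz'
      exact mul_left_cancel₀ hgne key
  apply mkStep N !![1,0,0; 0,a,b; 0,c2,d2]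
  · rw [Matrix.det_fin_three]; simp; linear_combination hdet2
  · simp
  · simp
  · funext i
    fin_cases i <;>
      simp [Matrix.mulVec, dotProduct, Fin.sum_univ_three]
    · linear_combination hab
    · linear_combination hcd

theorem exists_part (N : ℕ) (hN : 0 < N) (v : Fin 3 → ℤ) (hv : Finset.univ.gcd v = 1) :
    ∃ d : ℕ, 0 < d ∧ d ∣ N ∧ GRel N v ![(d:ℤ), 1, 0] := by
  have hNne : N ≠ 0 := hN.ne'
  have hgcd : Int.gcd (v 0) (Int.gcd (v 1) (v 2)) = 1 := univ_gcd_eq v hv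
  set g : ℤ := (Int.gcd (v 1) (v 2) : ℤ) with hgdef
  have hA : GRel N v ![v 0, g, 0] := stepA N v
  have hxg : IsCoprime (v 0) g := by
    rw [Int.isCoprime_iff_gcd_eq_one, hgdef]
    simpa [Int.gcd, Int.natAbs_natCast, hgdef] using hgcd
  obtain ⟨p, q, hpq⟩ := hxg
  have hB : GRel N ![v 0, g, 0] ![v 0, g, 1] := by
    apply mkStep N !![1,0,0; 0,1,0; p,q,1]
    · simp [Matrix.det_fin_three, Matrix.vecHead, Matrix.vecTail]
    · simp
    · simp
    · funext i
      fin_cases i <;> simp [Matrix.mulVec, dotProduct, Fin.sum_univ_three] <;>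
        linear_combination hpq
  have hC : GRel N ![v 0, g, 1] ![v 0, 0, 1] := by
    apply mkStep N !![1,0,0; 0,1,-g; 0,0,1]
    · simp [Matrix.det_fin_three, Matrix.vecHead, Matrix.vecTail]
    · simp
    · simp
    · funext i
      fin_cases i <;> simp [Matrix.mulVec, dotProduct, Fin.sum_univ_three]
  set d : ℕ := Int.gcd (v 0) (N : ℤ) with hddef
  have hdN : d ∣ N := by
    have : (d:ℤ) ∣ (N:ℤ) := Int.gcd_dvd_right _ _
    exact_mod_cast this
  have hdne : d ≠ 0 := by
    intro h
    rw [hddef, Int.gcd_eq_zero_iff] at h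
    exact hNne (by exact_mod_cast h.2)
  have hdpos : 0 < d := Nat.pos_of_ne_zero hdne
  obtain ⟨X, hX⟩ : ((d:ℤ)) ∣ v 0 := Int.gcd_dvd_left _ _
  obtain ⟨N₁, hN₁⟩ : ((d:ℤ)) ∣ (N:ℤ) := Int.gcd_dvd_right _ _
  have hXN₁ : IsCoprime X N₁ := by
    rw [Int.isCoprime_iff_gcd_eq_one]
    have h2 : Int.gcd ((d:ℤ)*X) ((d:ℤ)*N₁) = d * Int.gcd X N₁ := by
      rw [Int.gcd_mul_left]; simp
    rw [← hX, ← hN₁] at h2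
    rw [← hddef] at h2
    nth_rewrite 1 [← mul_one d] at h2
    exact (Nat.eq_of_mul_eq_mul_left hdpos h2).symm
  obtain ⟨l, hl⟩ := exists_coprime_add_mul X N₁ N hXN₁ hNne
  set X' : ℤ := X + N₁ * l with hX'def
  have hx' : v 0 + N*l = (d:ℤ) * X' := by
    rw [hX'def]; linear_combination hX + l * hN₁
  have hD : GRel N ![v 0, 0, 1] ![v 0 + N*l, 0, 1] := by
    apply mkStep N !![1,0,(N:ℤ)*l; 0,1,0; 0,0,1]
    · simp [Matrix.det_fin_three, Matrix.vecHead, Matrix.vecTail]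
    · simp
    · exact Dvd.intro l rfl
    · funext i
      fin_cases i <;> simp [Matrix.mulVec, dotProduct, Fin.sum_univ_three]
  have hN₁dvd : N₁ ∣ (N:ℤ) := ⟨(d:ℤ), by linear_combination hN₁⟩
  have hX'N₁ : IsCoprime X' N₁ := hl.of_isCoprime_of_dvd_right hN₁dvd
  obtain ⟨α, γ, hαγ⟩ := hX'N₁
  have hαN₁ : IsCoprime α N₁ := ⟨X', γ, by linear_combination hαγ⟩
  obtain ⟨t, ht⟩ := exists_coprime_add_mul α N₁ d hαN₁ hdne
  set α' : ℤ := α + N₁ * t with hα'def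
  set γ' : ℤ := γ - t * X' with hγ'def
  have hα'γ' : α' * X' + γ' * N₁ = 1 := by
    rw [hα'def, hγ'def]; linear_combination hαγ
  have hα'd : IsCoprime α' ((d:ℤ)) := ht
  have hα'N₁ : IsCoprime α' N₁ := ⟨X', γ', by linear_combination hα'γ'⟩
  have hα'γ'cop : IsCoprime α' γ' := ⟨X', N₁, by linear_combination hα'γ'⟩
  have hα'Nγ' : IsCoprime α' ((N:ℤ) * γ') := by
    have h1 : IsCoprime α' ((d:ℤ) * N₁ * γ') := (hα'd.mul_right hα'N₁).mul_right hα'γ'cop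
    have h2 : (N:ℤ) * γ' = (d:ℤ) * N₁ * γ' := by rw [hN₁]
    rwa [h2]
  obtain ⟨ε, w, hdet⟩ := hα'Nγ'
  set δ : ℤ := -w with hδdef
  set e : ℤ := δ * ((d:ℤ)*X') + ε with hedef
  have hE : GRel N ![v 0 + N*l, 0, 1] ![(d:ℤ), 0, e] := by
    apply mkStep N !![α', 0, (N:ℤ)*γ'; 0,1,0; δ, 0, ε]
    · simp [Matrix.det_fin_three, Matrix.vecHead, Matrix.vecTail]
      rw [hδdef]; linear_combination hdet
    · simp
    · exact Dvd.intro γ' rfl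
    · funext i
      fin_cases i
      · simp [Matrix.mulVec, dotProduct, Fin.sum_univ_three]
        linear_combination α' * hx' + (d:ℤ) * hα'γ' + γ' * hN₁
      · simp [Matrix.mulVec, dotProduct, Fin.sum_univ_three]
      · simp [Matrix.mulVec, dotProduct, Fin.sum_univ_three]
        rw [hedef]; linear_combination δ * hx'
  have hDe : -δ*(d:ℤ) + α'*e = 1 := by
    rw [hedef, hδdef]; linear_combination hdet + (-w) * (d:ℤ) * hα'γ' + (-w) * γ' * hN₁
  have hF : GRel N ![(d:ℤ), 0, e] ![(d:ℤ), 1, e] := by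
    apply mkStep N !![1,0,0; -δ,1,α'; 0,0,1]
    · simp [Matrix.det_fin_three, Matrix.vecHead, Matrix.vecTail]
    · simp
    · simp
    · funext i
      fin_cases i <;> simp [Matrix.mulVec, dotProduct, Fin.sum_univ_three]
      linear_combination hDe
  have hG : GRel N ![(d:ℤ), 1, e] ![(d:ℤ), 1, 0] := by
    apply mkStep N !![1,0,0; 0,1,0; 0,-e,1]
    · simp [Matrix.det_fin_three, Matrix.vecHead, Matrix.vecTail]
    · simp
    · simp
    · funext i
      fin_cases i <;> simp [Matrix.mulVec, dotProduct, Fin.sum_univ_three]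
  exact ⟨d, hdpos, hdN,
    hA.trans (hB.trans (hC.trans (hD.trans (hE.trans (hF.trans hG)))))⟩

theorem uniq_aux (N : ℕ) (hN : 0 < N) (v : Fin 3 → ℤ) (d : ℕ) (hd : 0 < d) (hdN : d ∣ N)
    (γ : Matrix.SpecialLinearGroup (Fin 3) ℤ)
    (hmem : (N:ℤ) ∣ (γ : Matrix (Fin 3) (Fin 3) ℤ) 0 1 ∧
      (N:ℤ) ∣ (γ : Matrix (Fin 3) (Fin 3) ℤ) 0 2)
    (s : ℤ) (hs : s = 1 ∨ s = -1)
    (hcar : (γ : Matrix (Fin 3) (Fin 3) ℤ).mulVec v = s • ![(d:ℤ), 1, 0]) :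
    d = Int.gcd (v 0) (N:ℤ) := by
  set M : Matrix (Fin 3) (Fin 3) ℤ := (γ : Matrix (Fin 3) (Fin 3) ℤ) with hM
  have h0 : M 0 0 * v 0 + M 0 1 * v 1 + M 0 2 * v 2 = s * (d:ℤ) := by
    have h := congrFun hcar 0
    simpa [Matrix.mulVec, dotProduct, Fin.sum_univ_three] using h
  have hdet3 : M 0 0 * (M 1 1 * M 2 2 - M 1 2 * M 2 1)
      - M 0 1 * (M 1 0 * M 2 2 - M 1 2 * M 2 0)
      + M 0 2 * (M 1 0 * M 2 1 - M 1 1 * M 2 0) = 1 := by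
    have h := γ.2
    rw [Matrix.det_fin_three] at h
    linear_combination h
  obtain ⟨b', hb'⟩ := hmem.1
  obtain ⟨c', hc'⟩ := hmem.2
  have hcop : IsCoprime (M 0 0) ((N:ℕ):ℤ) := by
    refine ⟨M 1 1 * M 2 2 - M 1 2 * M 2 1,
      -(b' * (M 1 0 * M 2 2 - M 1 2 * M 2 0)) + c' * (M 1 0 * M 2 1 - M 1 1 * M 2 0), ?_⟩
    linear_combination hdet3 + (M 1 0 * M 2 2 - M 1 2 * M 2 0) * hb'
      - (M 1 0 * M 2 1 - M 1 1 * M 2 0) * hc'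
  have hdZ : ((d:ℕ):ℤ) ∣ (N:ℤ) := Int.natCast_dvd_natCast.mpr hdN
  set e : ℕ := Int.gcd (v 0) (N:ℤ) with hedef
  have hev : ((e:ℕ):ℤ) ∣ v 0 := Int.gcd_dvd_left _ _
  have heN : ((e:ℕ):ℤ) ∣ (N:ℤ) := Int.gcd_dvd_right _ _
  -- e ∣ d
  have hed : e ∣ d := by
    have h1 : ((e:ℕ):ℤ) ∣ s * (d:ℤ) := by
      rw [← h0]
      exact dvd_add (dvd_add (Dvd.dvd.mul_left hev _)
        (Dvd.dvd.mul_right (hb' ▸ Dvd.dvd.mul_right heN b') _))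
        (Dvd.dvd.mul_right (hc' ▸ Dvd.dvd.mul_right heN c') _)
    have h2 : ((e:ℕ):ℤ) ∣ (d:ℤ) := by
      rcases hs with rfl | rfl
      · simpa using h1
      · exact (dvd_neg.mp (by simpa using h1))
    exact_mod_cast h2
  -- d ∣ e
  have hde : d ∣ e := by
    have h1 : ((d:ℕ):ℤ) ∣ M 0 0 * v 0 := by
      have h2 : M 0 0 * v 0 = s * (d:ℤ) - M 0 1 * v 1 - M 0 2 * v 2 := by linarith [h0]
      rw [h2, hb', hc']
      exact dvd_sub (dvd_sub (Dvd.dvd.mul_left dvd_rfl s)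
        (Dvd.dvd.mul_right (Dvd.dvd.mul_right hdZ b') _))
        (Dvd.dvd.mul_right (Dvd.dvd.mul_right hdZ c') _)
    have hcopd : IsCoprime ((d:ℕ):ℤ) (M 0 0) := (hcop.of_isCoprime_of_dvd_right hdZ).symm
    have h3 : ((d:ℕ):ℤ) ∣ v 0 := hcopd.dvd_of_dvd_mul_left h1
    have h4 : ((d:ℕ):ℤ) ∣ (e:ℤ) := Int.dvd_coe_gcd h3 hdZ
    exact_mod_cast h4
  exact Nat.dvd_antisymm hde hed

/-- **Statement 4.** For every primitive `v ∈ ℤ³` there are a positive divisor `d` of `N`,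
a matrix `γ ∈ Γ₀(N,3)′` and a sign `s` with `γ · v = s • (d,1,0)ᵀ`; moreover `d` is uniquely
determined by `v`. -/
theorem stmt_4 (N : ℕ) (hN : 0 < N) :
    (∀ v : Fin 3 → ℤ, Finset.univ.gcd v = 1 →
      ∃ d : ℕ, 0 < d ∧ d ∣ N ∧ ∃ γ, InGamma0' N γ ∧ CarriesTo γ v ![(d : ℤ), 1, 0]) ∧
    (∀ v : Fin 3 → ℤ, Finset.univ.gcd v = 1 →
      ∀ d d' : ℕ, 0 < d → d ∣ N → 0 < d' → d' ∣ N →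
      (∃ γ, InGamma0' N γ ∧ CarriesTo γ v ![(d : ℤ), 1, 0]) →
      (∃ γ, InGamma0' N γ ∧ CarriesTo γ v ![(d' : ℤ), 1, 0]) → d = d') := by
  constructor
  · intro v hv
    obtain ⟨d, hd, hdN, γ, hmem, hcar⟩ := exists_part N hN v hv
    exact ⟨d, hd, hdN, γ, ⟨hmem.1, hmem.2⟩, 1, Or.inl rfl, by rw [hcar]; simp⟩
  · rintro v hv d d' hd hdN hd' hd'N ⟨γ, hmem, s, hs, hcar⟩ ⟨γ', hmem', s', hs', hcar'⟩
    have h1 := uniq_aux N hN v d hd hdN γ ⟨hmem.1, hmem.2⟩ s hs hcar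
    have h2 := uniq_aux N hN v d' hd' hd'N γ' ⟨hmem'.1, hmem'.2⟩ s' hs' hcar'
    rw [h1, h2]
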